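/- For every twice continuously differentiable f : ℝ → ℂ and every x ∈ ℝ: (i) (D₂*(D₂ f))(x) = (Lf)(x) + 3 f(x); (ii) (D₁(D₁* f))(x) = −f''(x) + f(x); (iii) (D₂(D₂* f))(x) − 3 f(x) = (D₁*(D₁ f))(x). Consequently, for every four times continuously differentiable f : ℝ → ℂ and every x ∈ ℝ, (D₁(D₂(Lf)))(x) = (−∂ₓ² + 1)(D₁(D₂ f))(x). -/

import Mathlib

noncomputable section

/-- `sech x = 1 / cosh x`. -/
def sech (x : ℝ) : ℝ := 1 / Real.cosh x

/-- `D₁ f = f' + tanh · f`. -/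
def D1 (f : ℝ → ℂ) (x : ℝ) : ℂ := deriv f x + (Real.tanh x : ℂ) * f x

/-- `D₂ f = f' + 2 tanh · f`. -/
def D2 (f : ℝ → ℂ) (x : ℝ) : ℂ := deriv f x + 2 * (Real.tanh x : ℂ) * f x

/-- `D₁* f = −f' + tanh · f`. -/
def D1s (f : ℝ → ℂ) (x : ℝ) : ℂ := -(deriv f x) + (Real.tanh x : ℂ) * f x

/-- `D₂* f = −f' + 2 tanh · f`. -/
def D2s (f : ℝ → ℂ) (x : ℝ) : ℂ := -(deriv f x) + 2 * (Real.tanh x : ℂ) * f x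

/-- The linearized operator `L f = −f'' − 6 sech² · f + f`. -/
def Lop (f : ℝ → ℂ) (x : ℝ) : ℂ :=
  -(deriv (deriv f) x) - 6 * (sech x : ℂ) ^ 2 * f x + f x

lemma tanh_hasDerivAt (x : ℝ) : HasDerivAt Real.tanh (sech x ^ 2) x := by
  have hc := Real.cosh_pos x
  have h := ((Real.hasDerivAt_sinh x).div (Real.hasDerivAt_cosh x) hc.ne')
  have : HasDerivAt (fun y => Real.sinh y / Real.cosh y)
      ((Real.cosh x * Real.cosh x - Real.sinh x * Real.sinh x) / Real.cosh x ^ 2) x := h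
  have heq : (Real.cosh x * Real.cosh x - Real.sinh x * Real.sinh x) / Real.cosh x ^ 2
      = sech x ^ 2 := by
    have := Real.cosh_sq_sub_sinh_sq x
    unfold sech
    field_simp
    nlinarith [this]
  rw [heq] at this
  have hfun : Real.tanh = fun y => Real.sinh y / Real.cosh y := by
    funext y; exact Real.tanh_eq_sinh_div_cosh y
  rw [hfun]
  exact this

lemma T_hasDerivAt (x : ℝ) :
    HasDerivAt (fun y => (Real.tanh y : ℂ)) ((sech x : ℂ) ^ 2) x := by
  have := (tanh_hasDerivAt x).ofReal_comp
  simpa using this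

lemma tanh_sq (x : ℝ) : (Real.tanh x : ℂ) ^ 2 = 1 - (sech x : ℂ) ^ 2 := by
  have hc := (Real.cosh_pos x).ne'
  have h := Real.cosh_sq_sub_sinh_sq x
  have : Real.tanh x ^ 2 = 1 - sech x ^ 2 := by
    rw [Real.tanh_eq_sinh_div_cosh]
    unfold sech
    field_simp
    nlinarith [h]
  calc (Real.tanh x : ℂ) ^ 2 = ((Real.tanh x ^ 2 : ℝ) : ℂ) := by push_cast; ring
    _ = ((1 - sech x ^ 2 : ℝ) : ℂ) := by rw [this]
    _ = 1 - (sech x : ℂ) ^ 2 := by push_cast; ring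

section derivs

variable {f : ℝ → ℂ}

lemma deriv_Tmul {c : ℂ} (hf : Differentiable ℝ f) (x : ℝ) :
    deriv (fun y => c * (Real.tanh y : ℂ) * f y) x
      = c * (sech x : ℂ) ^ 2 * f x + c * (Real.tanh x : ℂ) * deriv f x := by
  have h : HasDerivAt (fun y => c * (Real.tanh y : ℂ) * f y)
      ((c * (sech x : ℂ) ^ 2) * f x + (c * (Real.tanh x : ℂ)) * deriv f x) x := by
    exact (((T_hasDerivAt x).const_mul c).mul (hf x).hasDerivAt)
  simpa using h.deriv

lemma diff_Tmul {c : ℂ} (hf : Differentiable ℝ f) :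
    Differentiable ℝ (fun y => c * (Real.tanh y : ℂ) * f y) := by
  intro x
  exact (((T_hasDerivAt x).const_mul c).mul (hf x).hasDerivAt).differentiableAt

lemma deriv_D2 (hf : ContDiff ℝ 2 f) (x : ℝ) :
    deriv (D2 f) x = deriv (deriv f) x + 2 * (sech x : ℂ) ^ 2 * f x
      + 2 * (Real.tanh x : ℂ) * deriv f x := by
  have hd : Differentiable ℝ f := hf.differentiable (by norm_num)
  have hd' : Differentiable ℝ (deriv f) :=
    (hf.iterate_deriv' 1 1).differentiable (by norm_num)
  have : D2 f = fun y => deriv f y + (fun z => (2:ℂ) * (Real.tanh z : ℂ) * f z) y := rfl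
  rw [this, deriv_fun_add (hd' x) (diff_Tmul hd x), deriv_Tmul hd x]
  ring

lemma deriv_D2s (hf : ContDiff ℝ 2 f) (x : ℝ) :
    deriv (D2s f) x = -(deriv (deriv f) x) + 2 * (sech x : ℂ) ^ 2 * f x
      + 2 * (Real.tanh x : ℂ) * deriv f x := by
  have hd : Differentiable ℝ f := hf.differentiable (by norm_num)
  have hd' : Differentiable ℝ (deriv f) :=
    (hf.iterate_deriv' 1 1).differentiable (by norm_num)
  have : D2s f = fun y => -(deriv f y) + (fun z => (2:ℂ) * (Real.tanh z : ℂ) * f z) y := rfl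
  rw [this, deriv_fun_add (f := fun y => -deriv f y) ((hd' x)).neg (diff_Tmul hd x), deriv.fun_neg,
    deriv_Tmul hd x]
  ring

lemma deriv_D1 (hf : ContDiff ℝ 2 f) (x : ℝ) :
    deriv (D1 f) x = deriv (deriv f) x + (sech x : ℂ) ^ 2 * f x
      + (Real.tanh x : ℂ) * deriv f x := by
  have hd : Differentiable ℝ f := hf.differentiable (by norm_num)
  have hd' : Differentiable ℝ (deriv f) :=
    (hf.iterate_deriv' 1 1).differentiable (by norm_num)
  have : D1 f = fun y => deriv f y + (fun z => (1:ℂ) * (Real.tanh z : ℂ) * f z) y := by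
    funext y; simp [D1]
  rw [this, deriv_fun_add (hd' x) (diff_Tmul hd x), deriv_Tmul hd x]
  ring

lemma deriv_D1s (hf : ContDiff ℝ 2 f) (x : ℝ) :
    deriv (D1s f) x = -(deriv (deriv f) x) + (sech x : ℂ) ^ 2 * f x
      + (Real.tanh x : ℂ) * deriv f x := by
  have hd : Differentiable ℝ f := hf.differentiable (by norm_num)
  have hd' : Differentiable ℝ (deriv f) :=
    (hf.iterate_deriv' 1 1).differentiable (by norm_num)
  have : D1s f = fun y => -(deriv f y) + (fun z => (1:ℂ) * (Real.tanh z : ℂ) * f z) y := by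
    funext y; simp [D1s]
  rw [this, deriv_fun_add (f := fun y => -deriv f y) ((hd' x)).neg (diff_Tmul hd x), deriv.fun_neg,
    deriv_Tmul hd x]
  ring

end derivs

lemma contDiff_T {n : WithTop ℕ∞} : ContDiff ℝ n (fun y => (Real.tanh y : ℂ)) := by
  have h1 : ContDiff ℝ n Real.tanh := by
    have : Real.tanh = fun y => Real.sinh y / Real.cosh y := by
      funext y; exact Real.tanh_eq_sinh_div_cosh y
    rw [this]
    exact Real.contDiff_sinh.div Real.contDiff_cosh (fun y => (Real.cosh_pos y).ne')
  exact Complex.ofRealCLM.contDiff.comp h1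

lemma contDiff_D2 {f : ℝ → ℂ} {n : ℕ} (hf : ContDiff ℝ (n + 1 : ℕ) f) :
    ContDiff ℝ (n : ℕ) (D2 f) := by
  have hdf : ContDiff ℝ (n : ℕ) (deriv f) := (contDiff_succ_iff_deriv.mp hf).2.2
  have : D2 f = fun y => deriv f y + 2 * (Real.tanh y : ℂ) * f y := rfl
  rw [this]
  exact hdf.add (((contDiff_const.mul contDiff_T).mul (hf.of_le (by
    exact_mod_cast Nat.le_succ n))))

lemma contDiff_D1 {f : ℝ → ℂ} {n : ℕ} (hf : ContDiff ℝ (n + 1 : ℕ) f) :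
    ContDiff ℝ (n : ℕ) (D1 f) := by
  have hdf : ContDiff ℝ (n : ℕ) (deriv f) := (contDiff_succ_iff_deriv.mp hf).2.2
  have : D1 f = fun y => deriv f y + (Real.tanh y : ℂ) * f y := rfl
  rw [this]
  exact hdf.add ((contDiff_T.mul (hf.of_le (by exact_mod_cast Nat.le_succ n))))

lemma contDiff_D2s {f : ℝ → ℂ} {n : ℕ} (hf : ContDiff ℝ (n + 1 : ℕ) f) :
    ContDiff ℝ (n : ℕ) (D2s f) := by
  have hdf : ContDiff ℝ (n : ℕ) (deriv f) := (contDiff_succ_iff_deriv.mp hf).2.2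
  have : D2s f = fun y => -(deriv f y) + 2 * (Real.tanh y : ℂ) * f y := rfl
  rw [this]
  exact hdf.neg.add (((contDiff_const.mul contDiff_T).mul (hf.of_le (by
    exact_mod_cast Nat.le_succ n))))

lemma D2_sub {g h : ℝ → ℂ} (hg : Differentiable ℝ g) (hh : Differentiable ℝ h)
    (y : ℝ) : D2 (fun z => g z - 3 * h z) y = D2 g y - 3 * D2 h y := by
  simp only [D2]
  rw [deriv_fun_sub (hg y) ((hh y).const_mul 3), deriv_const_mul 3 (hh y)]
  ring

theorem part1 (f : ℝ → ℂ) (hf : ContDiff ℝ 2 f) (x : ℝ) :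
    D2s (D2 f) x = Lop f x + 3 * f x ∧
    D1 (D1s f) x = -(deriv (deriv f) x) + f x ∧
    D2 (D2s f) x - 3 * f x = D1s (D1 f) x := by
  have ht := tanh_sq x
  refine ⟨?_, ?_, ?_⟩
  · simp only [D2s, D2, Lop, deriv_D2 hf x]
    linear_combination 4 * f x * ht
  · simp only [D1, D1s, deriv_D1s hf x]
    linear_combination f x * ht
  · simp only [D2, D2s, D1s, D1, deriv_D2s hf x, deriv_D1 hf x]
    linear_combination 3 * f x * ht

/-- Factorization identities for the linearized operator and the resulting
conjugation identity `D₁ D₂ L = (−∂ₓ² + 1) D₁ D₂`. -/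
theorem factorization_identities :
    (∀ f : ℝ → ℂ, ContDiff ℝ 2 f → ∀ x : ℝ,
        D2s (D2 f) x = Lop f x + 3 * f x ∧
        D1 (D1s f) x = -(deriv (deriv f) x) + f x ∧
        D2 (D2s f) x - 3 * f x = D1s (D1 f) x) ∧
      ∀ f : ℝ → ℂ, ContDiff ℝ 4 f → ∀ x : ℝ,
        D1 (D2 (Lop f)) x = -(deriv (deriv (D1 (D2 f))) x) + D1 (D2 f) x := by
  constructor
  · exact part1
  · intro f hf x
    have hf2 : ContDiff ℝ 2 f := hf.of_le (by norm_num)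
    have hf3 : ContDiff ℝ (2 + 1 : ℕ) f := hf.of_le (by norm_num)
    have hD2f3 : ContDiff ℝ (2 : ℕ) (D2 f) := contDiff_D2 hf3
    -- L f = D2s (D2 f) - 3 f
    have hL : Lop f = fun y => D2s (D2 f) y - 3 * f y := by
      funext y
      have := (part1 f hf2 y).1
      rw [this]; ring
    -- D2 (Lop f) = D1s (D1 (D2 f))
    have hD2sD2diff : Differentiable ℝ (D2s (D2 f)) :=
      (contDiff_D2s (n := 1) hD2f3).differentiable (by norm_num)
    have hstep : D2 (Lop f) = fun y => D1s (D1 (D2 f)) y := by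
      funext y
      rw [hL, D2_sub hD2sD2diff (hf.differentiable (by norm_num))]
      have := (part1 (D2 f) (by exact_mod_cast hD2f3) y).2.2
      linear_combination this
    have hD2f4 : ContDiff ℝ (3 + 1 : ℕ) f := by exact_mod_cast hf
    have hD2f : ContDiff ℝ (3 : ℕ) (D2 f) := contDiff_D2 hD2f4
    have hD1D2f : ContDiff ℝ (2 : ℕ) (D1 (D2 f)) := contDiff_D1 (by exact_mod_cast hD2f)
    have hfin := (part1 (D1 (D2 f)) (by exact_mod_cast hD1D2f) x).2.1
    calc D1 (D2 (Lop f)) x = D1 (D1s (D1 (D2 f))) x := by rw [hstep]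
      _ = -(deriv (deriv (D1 (D2 f))) x) + D1 (D2 f) x := hfin
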